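/- arXiv:dg-ga/9508013 — 5 statements merged into one kernel-verified Lean document; each statement's English description precedes it below -/
import Mathlib

section
/- The double bracket on g ⊕ g* satisfies the Jacobi identity ([[a,b],c] + [[b,c],a] + [[c,a],b] = 0 for all a,b,c ∈ g ⊕ g*) if and only if the compatibility (Lie bialgebra) condition holds for the pair (g, g*). (Base-point case of Theorems 2.5 and 2.6: the double of a Lie bialgebra is a Lie algebra, and conversely.) -/
open Module

/-- The double bracket on `g ⊕ g*`:
`[(x,ξ),(y,η)] = ([x,y] + ad*_ξ y − ad*_η x, [ξ,η] + ad*_x η − ad*_y ξ)`,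
where `br` is the bracket on `g*`, `ad` is the coadjoint action of `g` on `g*`
and `ad'` is the coadjoint action of `g*` on `g`. -/
def doubleBracket {g : Type*} [LieRing g] [LieAlgebra ℝ g]
    (br : Dual ℝ g → Dual ℝ g → Dual ℝ g)
    (ad : g → Dual ℝ g → Dual ℝ g)
    (ad' : Dual ℝ g → g → g)
    (a b : g × Dual ℝ g) : g × Dual ℝ g :=
  (⁅a.1, b.1⁆ + ad' a.2 b.1 - ad' b.2 a.1,
   br a.2 b.2 + ad a.1 b.2 - ad b.1 a.2)

/-- The compatibility (Lie bialgebra) condition for the pair `(g, g*)`: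
`⟨[ξ,η],[x,y]⟩ = −⟨[ad*_x ξ, η], y⟩ − ⟨[ξ, ad*_x η], y⟩ + ⟨[ad*_y ξ, η], x⟩ + ⟨[ξ, ad*_y η], x⟩`. -/
def LieBialgebraCompat {g : Type*} [LieRing g] [LieAlgebra ℝ g]
    (br : Dual ℝ g → Dual ℝ g → Dual ℝ g)
    (ad : g → Dual ℝ g → Dual ℝ g) : Prop :=
  ∀ (x y : g) (ξ η : Dual ℝ g),
    br ξ η ⁅x, y⁆ =
      - br (ad x ξ) η y - br ξ (ad x η) y + br (ad y ξ) η x + br ξ (ad y η) x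

/-- the double bracket on `g ⊕ g*` satisfies the Jacobi identity iff the
compatibility (Lie bialgebra) condition holds for the pair `(g, g*)`. -/
theorem double_jacobi_iff_lieBialgebraCompat
    {g : Type*} [LieRing g] [LieAlgebra ℝ g] [FiniteDimensional ℝ g]
    (br : Dual ℝ g →ₗ[ℝ] Dual ℝ g →ₗ[ℝ] Dual ℝ g)
    (br_skew : ∀ ξ : Dual ℝ g, br ξ ξ = 0)
    (br_jacobi : ∀ ξ η ζ : Dual ℝ g,
      br (br ξ η) ζ + br (br η ζ) ξ + br (br ζ ξ) η = 0)
    (ad : g → Dual ℝ g → Dual ℝ g)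
    (had : ∀ (x : g) (ξ : Dual ℝ g) (y : g), ad x ξ y = - ξ ⁅x, y⁆)
    (ad' : Dual ℝ g → g → g)
    (had' : ∀ (ξ : Dual ℝ g) (x : g) (η : Dual ℝ g), η (ad' ξ x) = - br ξ η x) :
    (∀ a b c : g × Dual ℝ g,
        doubleBracket (fun ξ η => br ξ η) ad ad'
            (doubleBracket (fun ξ η => br ξ η) ad ad' a b) c
          + doubleBracket (fun ξ η => br ξ η) ad ad'
            (doubleBracket (fun ξ η => br ξ η) ad ad' b c) a
          + doubleBracket (fun ξ η => br ξ η) ad ad'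
            (doubleBracket (fun ξ η => br ξ η) ad ad' c a) b = 0)
      ↔ LieBialgebraCompat (fun ξ η => br ξ η) ad := by
  have hanti : ∀ (a b : Dual ℝ g), br a b = - br b a := by
    intro a b
    have h := br_skew (a + b)
    simp only [map_add, LinearMap.add_apply, br_skew] at h
    rw [eq_neg_iff_add_eq_zero]
    rw [← h]; abel
  have h0 : ∀ μ : Dual ℝ g, ad' μ 0 = 0 := by
    intro μ
    rw [← Module.forall_dual_apply_eq_zero_iff ℝ]
    intro φ; rw [had']; simp
  have L1 : ∀ (μ ξ : Dual ℝ g) (u w : g), μ ⁅ad' ξ u, w⁆ = - br ξ (ad w μ) u := by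
    intro μ ξ u w
    rw [← lie_skew, map_neg, ← had, had']
  have L2 : ∀ (μ ξ : Dual ℝ g) (u w : g), μ ⁅w, ad' ξ u⁆ = br ξ (ad w μ) u := by
    intro μ ξ u w
    rw [← lie_skew, map_neg, L1, neg_neg]
  have hA0 : ∀ μ : Dual ℝ g, ad 0 μ = 0 := by
    intro μ; ext v; rw [had]; simp
  have haptm : ∀ (a b : Dual ℝ g) (v : g), br a b v = - br b a v := by
    intro a b v; rw [hanti]; simp
  constructor
  · intro hJ x y ξ η
    have h := congrArg (fun p => p.2 y) (hJ (0, ξ) (0, η) (x, 0))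
    simp only [doubleBracket, Prod.fst_add, Prod.snd_add, h0, map_zero,
      LinearMap.zero_apply, zero_lie, lie_zero, zero_add, add_zero, sub_zero,
      zero_sub, Prod.fst_zero, Prod.snd_zero, LinearMap.add_apply,
      LinearMap.sub_apply, LinearMap.neg_apply, map_add, map_sub, map_neg,
      had, had', L1, L2, hA0, neg_lie, lie_neg, neg_neg, neg_zero,
      sub_neg_eq_add] at h
    simp only at h ⊢
    linear_combination h + haptm (ad x η) ξ y - haptm η (ad y ξ) x
  · intro hc
    have hc2 : ∀ (x y : g) (ξ η : Dual ℝ g),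
        br ξ η ⁅x, y⁆ =
          - br (ad x ξ) η y - br ξ (ad x η) y + br (ad y ξ) η x + br ξ (ad y η) x :=
      fun x y ξ η => hc x y ξ η
    have haptm2 : ∀ (a b c : Dual ℝ g) (v : g),
        br (br a b) c v = - br (br b a) c v := by
      intro a b c v; rw [hanti a b]; simp
    have hlsk' : ∀ (θ : Dual ℝ g) (u v : g), θ ⁅u, v⁆ = - θ ⁅v, u⁆ := by
      intro θ u v; rw [← lie_skew, map_neg]
    have hj : ∀ (θ : Dual ℝ g) (u v w : g),
        θ ⁅u, ⁅v, w⁆⁆ + θ ⁅v, ⁅w, u⁆⁆ + θ ⁅w, ⁅u, v⁆⁆ = 0 := by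
      intro θ u v w
      have := congrArg θ (lie_jacobi u v w)
      simpa using this
    have hjacv : ∀ (a b c : Dual ℝ g) (v : g),
        br (br a b) c v + br (br b c) a v + br (br c a) b v = 0 := by
      intro a b c v
      have h := br_jacobi a b c
      calc br (br a b) c v + br (br b c) a v + br (br c a) b v
          = (br (br a b) c + br (br b c) a + br (br c a) b) v := by simp
        _ = 0 := by rw [h]; simp
    have hlie2 : ∀ (θ : Dual ℝ g) (u v w : g),
        θ ⁅u, ⁅v, w⁆⁆ = θ ⁅⁅u, v⁆, w⁆ + θ ⁅v, ⁅u, w⁆⁆ := by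
      intro θ u v w; rw [leibniz_lie, map_add]
    have hlsk2 : ∀ (θ : Dual ℝ g) (u v w : g),
        θ ⁅⁅u, v⁆, w⁆ = - θ ⁅⁅v, u⁆, w⁆ := by
      intro θ u v w; rw [← lie_skew u v, neg_lie, map_neg]
    rintro ⟨x, ξ⟩ ⟨y, η⟩ ⟨z, ζ⟩
    rw [Prod.ext_iff]
    constructor
    · show _ = (0 : g × Dual ℝ g).1
      rw [Prod.fst_zero, Prod.fst_add, Prod.fst_add,
        ← Module.forall_dual_apply_eq_zero_iff ℝ]
      intro θ
      simp only [doubleBracket, map_add, map_sub, map_neg, LinearMap.add_apply,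
        LinearMap.sub_apply, LinearMap.neg_apply, add_lie, sub_lie, lie_add,
        lie_sub, neg_lie, lie_neg, had, had', L1, L2, neg_neg] at *
      linarith [hc2 x y ζ θ, hc2 y z ξ θ, hc2 z x η θ,
        hj θ x y z, hlsk' θ ⁅x, y⁆ z, hlsk' θ ⁅y, z⁆ x, hlsk' θ ⁅z, x⁆ y,
        hjacv ξ η θ z, haptm ξ (br η θ) z, haptm η (br ξ θ) z, haptm2 ξ θ η z,
        hjacv η ζ θ x, haptm η (br ζ θ) x, haptm ζ (br η θ) x, haptm2 η θ ζ x,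
        hjacv ζ ξ θ y, haptm ζ (br ξ θ) y, haptm ξ (br ζ θ) y, haptm2 ζ θ ξ y]
    · show _ = (0 : g × Dual ℝ g).2
      rw [Prod.snd_zero, Prod.snd_add, Prod.snd_add]
      ext w
      simp only [doubleBracket, map_add, map_sub, map_neg, LinearMap.add_apply,
        LinearMap.sub_apply, LinearMap.neg_apply, add_lie, sub_lie, lie_add,
        lie_sub, neg_lie, lie_neg, had, had', L1, L2, neg_neg,
        LinearMap.zero_apply] at *
      linarith [hc2 z w ξ η, hc2 x w η ζ, hc2 y w ζ ξ, hjacv ξ η ζ w,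
        hlie2 ζ x y w, hlie2 ξ y z w, hlie2 η z x w,
        haptm (ad y ξ) ζ w, haptm ξ (ad w ζ) y, haptm ξ (ad z η) w,
        haptm η (ad w ξ) z, haptm η (ad x ζ) w, haptm ζ (ad w η) x]
end

section
/- For any Lie algebra structures on g and on g* (no compatibility assumed), the symmetric pairing on g ⊕ g* is invariant under the double bracket: ([a,b], c)_+ + (b, [a,c])_+ = 0 for all a,b,c ∈ g ⊕ g*. (Base-point case of axiom (v) of a Courant algebroid for the double, Proposition 4.4.) -/
open Module

/-- The symmetric pairing `((x,ξ),(y,η))_+ = (1/2)(⟨ξ,y⟩ + ⟨η,x⟩)` on `g ⊕ g*`. -/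
noncomputable def pairPlus {g : Type*} [LieRing g] [LieAlgebra ℝ g]
    (a b : g × Dual ℝ g) : ℝ :=
  (1 / 2) * (a.2 b.1 + b.2 a.1)

/-- for any Lie algebra structures on `g` and `g*` (no compatibility
assumed), the symmetric pairing on `g ⊕ g*` is invariant under the double bracket:
`([a,b],c)_+ + (b,[a,c])_+ = 0`. -/
theorem double_pairing_invariant
    {g : Type*} [LieRing g] [LieAlgebra ℝ g] [FiniteDimensional ℝ g]
    (br : Dual ℝ g →ₗ[ℝ] Dual ℝ g →ₗ[ℝ] Dual ℝ g)
    (br_skew : ∀ ξ : Dual ℝ g, br ξ ξ = 0)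
    (br_jacobi : ∀ ξ η ζ : Dual ℝ g,
      br (br ξ η) ζ + br (br η ζ) ξ + br (br ζ ξ) η = 0)
    (ad : g → Dual ℝ g → Dual ℝ g)
    (had : ∀ (x : g) (ξ : Dual ℝ g) (y : g), ad x ξ y = - ξ ⁅x, y⁆)
    (ad' : Dual ℝ g → g → g)
    (had' : ∀ (ξ : Dual ℝ g) (x : g) (η : Dual ℝ g), η (ad' ξ x) = - br ξ η x) :
    ∀ a b c : g × Dual ℝ g,
      pairPlus (doubleBracket (fun ξ η => br ξ η) ad ad' a b) c
        + pairPlus b (doubleBracket (fun ξ η => br ξ η) ad ad' a c) = 0 := by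
  have skew : ∀ ξ η : Dual ℝ g, br ξ η = - br η ξ := by
    intro ξ η
    have h := br_skew (ξ + η)
    simp only [map_add, LinearMap.add_apply, br_skew ξ, br_skew η, zero_add, add_zero] at h
    rw [add_comm] at h
    exact eq_neg_of_add_eq_zero_left h
  rintro ⟨x, ξ⟩ ⟨y, η⟩ ⟨z, ζ⟩
  simp only [pairPlus, doubleBracket, LinearMap.add_apply, LinearMap.sub_apply,
    map_add, map_sub, had, had', lie_skew]
  have h1 : ζ ⁅y, x⁆ = - ζ ⁅x, y⁆ := by rw [← lie_skew x y, map_neg, neg_neg]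
  have h2 : ξ ⁅z, y⁆ = - ξ ⁅y, z⁆ := by rw [← lie_skew y z, map_neg, neg_neg]
  have h3 : η ⁅z, x⁆ = - η ⁅x, z⁆ := by rw [← lie_skew x z, map_neg, neg_neg]
  have h4 : br η ξ z = - br ξ η z := by rw [skew]; simp
  have h5 : br ζ ξ y = - br ξ ζ y := by rw [skew]; simp
  have h6 : br ζ η x = - br η ζ x := by rw [skew]; simp
  ring_nf
  simp only [h1, h2, h3, h4, h5, h6]
  ring
end

section
/- Let E be a finite-dimensional real Lie algebra with a nondegenerate ad-invariant symmetric bilinear form B, and let L1, L2 be Lie subalgebras of E that are both isotropic and complementary (E = L1 ⊕ L2 as vector spaces). Then the map φ : L2 → L1* given by φ(ξ) = 2B(ξ, ·)|_{L1} is a linear isomorphism, and the Lie algebra structure transported from L2 to L1* via φ, together with the Lie algebra structure of L1, satisfies the compatibility (Lie bialgebra) condition. (Base-point case of Theorem 2.6: a Manin triple determines a Lie bialgebra.) -/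
open Module

/-- a Manin triple determines a Lie bialgebra.  Let `E` be a
finite-dimensional real Lie algebra with a nondegenerate ad-invariant symmetric
bilinear form `B`, and let `L₁, L₂` be complementary isotropic Lie subalgebras.
Then `φ : L₂ → L₁*`, `φ(ξ) = 2B(ξ,·)|_{L₁}`, is a linear isomorphism, and the Lie
algebra structure transported from `L₂` to `L₁*` via `φ` together with that of `L₁`
satisfies the compatibility (Lie bialgebra) condition; the latter is expressed via
the pairing `⟨ξ,x⟩ = 2B(ξ,x)` between `L₂` and `L₁`, with the coadjoint action
`ad*` of `L₁` on `L₂` determined by `⟨ad*_x ξ, y⟩ = −⟨ξ,[x,y]⟩`. -/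
theorem manin_triple_gives_lie_bialgebra
    {E : Type*} [LieRing E] [LieAlgebra ℝ E] [FiniteDimensional ℝ E]
    (B : LinearMap.BilinForm ℝ E)
    (hB_symm : ∀ x y : E, B x y = B y x)
    (hB_nondeg : ∀ x : E, (∀ y : E, B x y = 0) → x = 0)
    (hB_inv : ∀ x y z : E, B ⁅z, x⁆ y + B x ⁅z, y⁆ = 0)
    (L₁ L₂ : LieSubalgebra ℝ E)
    (h₁_iso : ∀ x ∈ L₁, ∀ y ∈ L₁, B x y = 0)
    (h₂_iso : ∀ x ∈ L₂, ∀ y ∈ L₂, B x y = 0)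
    (h_compl : IsCompl L₁.toSubmodule L₂.toSubmodule) :
    (∃ φ : L₂ ≃ₗ[ℝ] Dual ℝ L₁, ∀ (ξ : L₂) (x : L₁), φ ξ x = 2 * B ξ x) ∧
    (∃ ad : L₁ → L₂ → L₂,
      (∀ (x : L₁) (ξ : L₂) (y : L₁),
        2 * B (ad x ξ : E) (y : E) = -(2 * B (ξ : E) (⁅x, y⁆ : L₁))) ∧
      (∀ (x y : L₁) (ξ η : L₂),
        2 * B (⁅ξ, η⁆ : L₂) (⁅x, y⁆ : L₁) =
          - (2 * B (⁅ad x ξ, η⁆ : L₂) (y : E))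
          - (2 * B (⁅ξ, ad x η⁆ : L₂) (y : E))
          + (2 * B (⁅ad y ξ, η⁆ : L₂) (x : E))
          + (2 * B (⁅ξ, ad y η⁆ : L₂) (x : E)))) := by
  classical
  -- projections
  set p := L₁.toSubmodule.linearProjOfIsCompl L₂.toSubmodule h_compl with hpdef
  set q := L₂.toSubmodule.linearProjOfIsCompl L₁.toSubmodule h_compl.symm with hqdef
  have hpq : ∀ z : E, (p z : E) + (q z : E) = z := fun z =>
    Submodule.projection_add_projection_eq_self h_compl z
  have hpmem : ∀ z : E, (p z : E) ∈ L₁ := fun z => (p z).2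
  have hqmem : ∀ z : E, (q z : E) ∈ L₂ := fun z => (q z).2
  -- basic bilinear-form identities
  have hinv : ∀ z a b : E, B ⁅z, a⁆ b = -(B a ⁅z, b⁆) := fun z a b => by
    have := hB_inv a b z; linarith
  have hBab : ∀ a b : E, B a b = B a (p b : E) + B a (q b : E) := fun a b => by
    conv_lhs => rw [← hpq b]
    rw [map_add]
  have hBab' : ∀ a b : E, B a b = B (p a : E) b + B (q a : E) b := fun a b => by
    conv_lhs => rw [← hpq a]
    rw [map_add, LinearMap.add_apply]
  have hdag : ∀ a b : E, B (q a : E) b = B a (p b : E) := fun a b => by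
    have h1 : B (q a : E) b = B (q a : E) (p b : E) + B (q a : E) (q b : E) := hBab _ _
    have h2 : B (q a : E) (q b : E) = 0 := h₂_iso _ (hqmem a) _ (hqmem b)
    have h3 : B a (p b : E) = B (p a : E) (p b : E) + B (q a : E) (p b : E) := hBab' _ _
    have h4 : B (p a : E) (p b : E) = 0 := h₁_iso _ (hpmem a) _ (hpmem b)
    linarith
  have hdag2 : ∀ a b : E, B (q a : E) b = B a b - B a (q b : E) := fun a b => by
    have := hdag a b; have := hBab a b; linarith
  have hsum : ∀ a b : E, B a (q b : E) + B b (q a : E) = B a b := fun a b => by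
    have h1 : B b (q a : E) = B (q a : E) b := hB_symm _ _
    have h2 := hdag2 a b
    have h3 : B (q a : E) b = B b (q a : E) := hB_symm _ _
    have h4 := hdag2 b a
    have h5 : B a b = B b a := hB_symm _ _
    linarith
  have hbr : ∀ c d w : E, B ⁅c, d⁆ w = -(B c ⁅w, d⁆) := fun c d w => by
    have h1 : B ⁅c, d⁆ w = -(B ⁅d, c⁆ w) := by
      rw [← lie_skew c d, map_neg, LinearMap.neg_apply]
    have h2 : B ⁅d, c⁆ w = -(B c ⁅d, w⁆) := hinv d c w
    have h3 : B c ⁅d, w⁆ = -(B c ⁅w, d⁆) := by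
      rw [← lie_skew d w, map_neg]
    linarith
  -- the coadjoint-type action
  set ad : L₁ → L₂ → L₂ := fun x ξ => ⟨(q ⁅(x : E), (ξ : E)⁆ : E), hqmem _⟩ with had
  have hadcoe : ∀ (x : L₁) (ξ : L₂), ((ad x ξ : L₂) : E) = (q ⁅(x : E), (ξ : E)⁆ : E) :=
    fun _ _ => rfl
  have hqleft : ∀ (z : E) (w : E), w ∈ L₁ → B (q z : E) w = B z w := fun z w hw => by
    have h1 := hBab' z w
    have h2 : B (p z : E) w = 0 := h₁_iso _ (hpmem z) _ hw
    linarith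
  constructor
  · -- the linear isomorphism φ
    have hfin1 : FiniteDimensional ℝ L₁ := FiniteDimensional.finiteDimensional_submodule L₁.toSubmodule
    have hfin2 : FiniteDimensional ℝ L₂ := FiniteDimensional.finiteDimensional_submodule L₂.toSubmodule
    let φ₀ : L₂ →ₗ[ℝ] Dual ℝ L₁ :=
      { toFun := fun ξ =>
          { toFun := fun x => 2 * B (ξ : E) (x : E)
            map_add' := fun a b => by
              have h : ((a + b : _) : E) = (a : E) + (b : E) := rfl
              simp only [h, map_add]; ring
            map_smul' := fun c a => by
              have h : ((c • a : _) : E) = c • (a : E) := rfl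
              simp only [h, map_smul, smul_eq_mul, RingHom.id_apply]; ring }
        map_add' := fun ξ η => by
          ext x
          have h : ((ξ + η : _) : E) = (ξ : E) + (η : E) := rfl
          simp only [h, map_add, LinearMap.coe_mk, AddHom.coe_mk, LinearMap.add_apply]
          ring
        map_smul' := fun c ξ => by
          ext x
          have h : ((c • ξ : _) : E) = c • (ξ : E) := rfl
          simp only [h, map_smul, LinearMap.coe_mk, AddHom.coe_mk,
            RingHom.id_apply, LinearMap.smul_apply, smul_eq_mul]
          ring }
    let ψ₀ : L₁ →ₗ[ℝ] Dual ℝ L₂ :=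
      { toFun := fun x =>
          { toFun := fun ξ => 2 * B (x : E) (ξ : E)
            map_add' := fun a b => by
              have h : ((a + b : _) : E) = (a : E) + (b : E) := rfl
              simp only [h, map_add]; ring
            map_smul' := fun c a => by
              have h : ((c • a : _) : E) = c • (a : E) := rfl
              simp only [h, map_smul, smul_eq_mul, RingHom.id_apply]; ring }
        map_add' := fun ξ η => by
          ext x
          have h : ((ξ + η : _) : E) = (ξ : E) + (η : E) := rfl
          simp only [h, map_add, LinearMap.coe_mk, AddHom.coe_mk, LinearMap.add_apply]
          ring
        map_smul' := fun c ξ => by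
          ext x
          have h : ((c • ξ : _) : E) = c • (ξ : E) := rfl
          simp only [h, map_smul, LinearMap.coe_mk, AddHom.coe_mk,
            RingHom.id_apply, LinearMap.smul_apply, smul_eq_mul]
          ring }
    have hφ₀inj : Function.Injective φ₀ := by
      rw [← LinearMap.ker_eq_bot, LinearMap.ker_eq_bot']
      intro ξ hξ
      have hz : ∀ w : E, B (ξ : E) w = 0 := by
        intro w
        have h1 : B (ξ : E) (p w : E) = 0 := by
          have := congrArg (fun f : Dual ℝ L₁ => f (p w)) hξ
          simp only [LinearMap.coe_mk, AddHom.coe_mk, LinearMap.zero_apply, φ₀] at this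
          linarith
        have h2 : B (ξ : E) (q w : E) = 0 := h₂_iso _ ξ.2 _ (hqmem w)
        have := hBab (ξ : E) w
        linarith
      exact Subtype.ext (hB_nondeg _ hz)
    have hψ₀inj : Function.Injective ψ₀ := by
      rw [← LinearMap.ker_eq_bot, LinearMap.ker_eq_bot']
      intro x hx
      have hz : ∀ w : E, B (x : E) w = 0 := by
        intro w
        have h1 : B (x : E) (q w : E) = 0 := by
          have := congrArg (fun f : Dual ℝ L₂ => f (q w)) hx
          simp only [LinearMap.coe_mk, AddHom.coe_mk, LinearMap.zero_apply, ψ₀] at this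
          linarith
        have h2 : B (x : E) (p w : E) = 0 := h₁_iso _ x.2 _ (hpmem w)
        have := hBab (x : E) w
        linarith
      exact Subtype.ext (hB_nondeg _ hz)
    have hle1 : finrank ℝ L₂ ≤ finrank ℝ L₁ := by
      have := LinearMap.finrank_le_finrank_of_injective hφ₀inj
      rwa [Subspace.dual_finrank_eq] at this
    have hle2 : finrank ℝ L₁ ≤ finrank ℝ L₂ := by
      have := LinearMap.finrank_le_finrank_of_injective hψ₀inj
      rwa [Subspace.dual_finrank_eq] at this
    have hrank : finrank ℝ L₂ = finrank ℝ (Dual ℝ L₁) := by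
      rw [Subspace.dual_finrank_eq]; omega
    have hφ₀surj : Function.Surjective φ₀ :=
      (LinearMap.injective_iff_surjective_of_finrank_eq_finrank hrank).1 hφ₀inj
    refine ⟨LinearEquiv.ofBijective φ₀ ⟨hφ₀inj, hφ₀surj⟩, fun ξ x => ?_⟩
    rfl
  · refine ⟨ad, ?_, ?_⟩
    · intro x ξ y
      have h1 : ((⁅x, y⁆ : L₁) : E) = ⁅(x : E), (y : E)⁆ := rfl
      rw [hadcoe, h1, hqleft _ _ y.2, hinv (x : E) (ξ : E) (y : E)]
      ring
    · intro x y ξ η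
      set X := (x : E); set Y := (y : E); set Ξ := (ξ : E); set H := (η : E)
      have c1 : ((⁅ξ, η⁆ : L₂) : E) = ⁅Ξ, H⁆ := rfl
      have c2 : ((⁅x, y⁆ : L₁) : E) = ⁅X, Y⁆ := rfl
      have c3 : ((⁅ad x ξ, η⁆ : L₂) : E) = ⁅(q ⁅X, Ξ⁆ : E), H⁆ := rfl
      have c4 : ((⁅ξ, ad x η⁆ : L₂) : E) = ⁅Ξ, (q ⁅X, H⁆ : E)⁆ := rfl
      have c5 : ((⁅ad y ξ, η⁆ : L₂) : E) = ⁅(q ⁅Y, Ξ⁆ : E), H⁆ := rfl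
      have c6 : ((⁅ξ, ad y η⁆ : L₂) : E) = ⁅Ξ, (q ⁅Y, H⁆ : E)⁆ := rfl
      rw [c1, c2, c3, c4, c5, c6]
      -- primitive quantities
      have hT1 : B ⁅(q ⁅X, Ξ⁆ : E), H⁆ Y
          = -(B ⁅X, Ξ⁆ ⁅Y, H⁆) + B ⁅X, Ξ⁆ (q ⁅Y, H⁆ : E) := by
        have h1 := hbr (q ⁅X, Ξ⁆ : E) H Y
        have h2 := hdag2 ⁅X, Ξ⁆ ⁅Y, H⁆
        linarith
      have hT2 : B ⁅Ξ, (q ⁅X, H⁆ : E)⁆ Y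
          = B ⁅X, H⁆ ⁅Y, Ξ⁆ - B ⁅X, H⁆ (q ⁅Y, Ξ⁆ : E) := by
        have h1 := hinv Ξ (q ⁅X, H⁆ : E) Y
        have h2 : B (q ⁅X, H⁆ : E) ⁅Ξ, Y⁆ = -(B (q ⁅X, H⁆ : E) ⁅Y, Ξ⁆) := by
          rw [← lie_skew Ξ Y, map_neg]
        have h3 := hdag2 ⁅X, H⁆ ⁅Y, Ξ⁆
        linarith
      have hT3 : B ⁅(q ⁅Y, Ξ⁆ : E), H⁆ X
          = -(B ⁅Y, Ξ⁆ ⁅X, H⁆) + B ⁅Y, Ξ⁆ (q ⁅X, H⁆ : E) := by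
        have h1 := hbr (q ⁅Y, Ξ⁆ : E) H X
        have h2 := hdag2 ⁅Y, Ξ⁆ ⁅X, H⁆
        linarith
      have hT4 : B ⁅Ξ, (q ⁅Y, H⁆ : E)⁆ X
          = B ⁅Y, H⁆ ⁅X, Ξ⁆ - B ⁅Y, H⁆ (q ⁅X, Ξ⁆ : E) := by
        have h1 := hinv Ξ (q ⁅Y, H⁆ : E) X
        have h2 : B (q ⁅Y, H⁆ : E) ⁅Ξ, X⁆ = -(B (q ⁅Y, H⁆ : E) ⁅X, Ξ⁆) := by
          rw [← lie_skew Ξ X, map_neg]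
        have h3 := hdag2 ⁅Y, H⁆ ⁅X, Ξ⁆
        linarith
      have hS1 := hsum ⁅X, Ξ⁆ ⁅Y, H⁆
      have hS2 := hsum ⁅X, H⁆ ⁅Y, Ξ⁆
      have hsym1 : B ⁅Y, H⁆ ⁅X, Ξ⁆ = B ⁅X, Ξ⁆ ⁅Y, H⁆ := hB_symm _ _
      have hsym2 : B ⁅Y, Ξ⁆ ⁅X, H⁆ = B ⁅X, H⁆ ⁅Y, Ξ⁆ := hB_symm _ _
      -- left-hand side via Jacobi
      have hLHS : B ⁅Ξ, H⁆ ⁅X, Y⁆ = B ⁅X, Ξ⁆ ⁅Y, H⁆ - B ⁅X, H⁆ ⁅Y, Ξ⁆ := by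
        have e1 := hinv Ξ H ⁅X, Y⁆
        have e3 : B H ⁅Ξ, ⁅X, Y⁆⁆ = B H ⁅⁅Ξ, X⁆, Y⁆ + B H ⁅X, ⁅Ξ, Y⁆⁆ := by
          rw [leibniz_lie Ξ X Y, map_add]
        have e4 := hinv ⁅Ξ, X⁆ H Y
        have e5 := hbr ⁅Ξ, X⁆ H Y
        have e6 : B ⁅Ξ, X⁆ ⁅Y, H⁆ = -(B ⁅X, Ξ⁆ ⁅Y, H⁆) := by
          rw [← lie_skew Ξ X, map_neg, LinearMap.neg_apply]
        have e7 := hinv X H ⁅Ξ, Y⁆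
        have e8 : B ⁅X, H⁆ ⁅Ξ, Y⁆ = -(B ⁅X, H⁆ ⁅Y, Ξ⁆) := by
          rw [← lie_skew Ξ Y, map_neg]
        linarith
      linarith
end

section
/- Assume the pair (g, g*) satisfies the compatibility (Lie bialgebra) condition, and let H : g* → g be a linear map that is skew-symmetric (⟨ξ, Hη⟩ = −⟨η, Hξ⟩ for all ξ,η ∈ g*). Then the graph {(Hξ, ξ) : ξ ∈ g*} is closed under the double bracket on g ⊕ g* (i.e., is a Lie subalgebra of the double) if and only if for all ξ,η,ζ ∈ g*: ⟨ζ,[Hξ,Hη]⟩ + ⟨ξ,[Hη,Hζ]⟩ + ⟨η,[Hζ,Hξ]⟩ + ⟨[ξ,η],Hζ⟩ + ⟨[η,ζ],Hξ⟩ + ⟨[ζ,ξ],Hη⟩ = 0 — the Maurer–Cartan equation d_*H + (1/2)[H,H] = 0 written out on triples of covectors. (Base-point case of Theorem 6.1.) -/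
open Module

/-- for a Lie bialgebra `(g, g*)` and a skew-symmetric linear map
`H : g* → g`, the graph `{(Hξ, ξ)}` is closed under the double bracket iff `H`
satisfies the Maurer–Cartan equation `d_*H + (1/2)[H,H] = 0`, written out on
triples of covectors. -/
theorem graph_closed_iff_maurer_cartan
    {g : Type*} [LieRing g] [LieAlgebra ℝ g] [FiniteDimensional ℝ g]
    (br : Dual ℝ g →ₗ[ℝ] Dual ℝ g →ₗ[ℝ] Dual ℝ g)
    (br_skew : ∀ ξ : Dual ℝ g, br ξ ξ = 0)
    (br_jacobi : ∀ ξ η ζ : Dual ℝ g,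
      br (br ξ η) ζ + br (br η ζ) ξ + br (br ζ ξ) η = 0)
    (ad : g → Dual ℝ g → Dual ℝ g)
    (had : ∀ (x : g) (ξ : Dual ℝ g) (y : g), ad x ξ y = - ξ ⁅x, y⁆)
    (ad' : Dual ℝ g → g → g)
    (had' : ∀ (ξ : Dual ℝ g) (x : g) (η : Dual ℝ g), η (ad' ξ x) = - br ξ η x)
    (hcompat : LieBialgebraCompat (fun ξ η => br ξ η) ad)
    (H : Dual ℝ g →ₗ[ℝ] g)
    (H_skew : ∀ ξ η : Dual ℝ g, ξ (H η) = - η (H ξ)) :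
    (∀ ξ η : Dual ℝ g, ∃ ζ : Dual ℝ g,
        doubleBracket (fun ξ η => br ξ η) ad ad' (H ξ, ξ) (H η, η) = (H ζ, ζ))
      ↔ (∀ ξ η ζ : Dual ℝ g,
          ζ ⁅H ξ, H η⁆ + ξ ⁅H η, H ζ⁆ + η ⁅H ζ, H ξ⁆
            + br ξ η (H ζ) + br η ζ (H ξ) + br ζ ξ (H η) = 0) := by
  have br_anti : ∀ ξ η : Dual ℝ g, br ξ η = - br η ξ := by
    intro ξ η
    have h := br_skew (ξ + η)
    simp only [map_add, LinearMap.add_apply, br_skew, zero_add, add_zero] at h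
    exact eq_neg_of_add_eq_zero_right h
  constructor
  · intro h ξ η ζ
    obtain ⟨μ, hμ⟩ := h ξ η
    rw [Prod.ext_iff] at hμ
    obtain ⟨h1, h2⟩ := hμ
    simp only [doubleBracket] at h1 h2
    have h1' : ζ (⁅H ξ, H η⁆ + ad' ξ (H η) - ad' η (H ξ)) = ζ (H μ) := by rw [h1]
    rw [← h2] at h1'
    simp only [map_add, map_sub, had'] at h1'
    have e1 : ζ (H (br ξ η)) = - br ξ η (H ζ) := H_skew ζ (br ξ η)
    have e2 : ζ (H (ad (H ξ) η)) = - ad (H ξ) η (H ζ) := H_skew ζ _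
    have e3 : ζ (H (ad (H η) ξ)) = - ad (H η) ξ (H ζ) := H_skew ζ _
    rw [e1, e2, e3, had, had] at h1'
    have lsk : η ⁅H ζ, H ξ⁆ = - η ⁅H ξ, H ζ⁆ := by
      rw [(lie_skew (H ζ) (H ξ)).symm, map_neg]
    rw [br_anti ζ ξ, lsk]
    simp only [LinearMap.neg_apply]
    linarith [h1']
  · intro h ξ η
    refine ⟨br ξ η + ad (H ξ) η - ad (H η) ξ, ?_⟩
    simp only [doubleBracket]
    refine Prod.ext ?_ rfl
    rw [← sub_eq_zero]
    rw [← Module.forall_dual_apply_eq_zero_iff ℝ]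
    intro ζ
    have key := h ξ η ζ
    simp only [map_add, map_sub, had']
    have e1 : ζ (H (br ξ η)) = - br ξ η (H ζ) := H_skew ζ (br ξ η)
    have e2 : ζ (H (ad (H ξ) η)) = - ad (H ξ) η (H ζ) := H_skew ζ _
    have e3 : ζ (H (ad (H η) ξ)) = - ad (H η) ξ (H ζ) := H_skew ζ _
    rw [e1, e2, e3, had, had]
    have lsk : η ⁅H ζ, H ξ⁆ = - η ⁅H ξ, H ζ⁆ := by
      rw [(lie_skew (H ζ) (H ξ)).symm, map_neg]
    rw [br_anti ζ ξ, lsk] at key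
    simp only [LinearMap.neg_apply] at key
    linarith [key]
end

section
/- Assume the pair (g, g*) satisfies the compatibility (Lie bialgebra) condition. Let h ⊆ g be a linear subspace and h° = {ξ ∈ g* : ξ(x) = 0 for all x ∈ h} its annihilator. Then the subspace h ⊕ h° of g ⊕ g* is closed under the double bracket if and only if h is a Lie subalgebra of g and h° is a Lie subalgebra of g*. (Base-point case of Proposition 7.1 on null Dirac structures.) -/
open Module

/-- Membership in a subspace via functionals vanishing on it (finite dim). -/
lemma mem_of_forall_ann {g : Type*} [AddCommGroup g] [Module ℝ g]
    (h : Submodule ℝ g) (v : g)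
    (hv : ∀ η : Dual ℝ g, (∀ z ∈ h, η z = 0) → η v = 0) : v ∈ h := by
  by_contra hvh
  obtain ⟨f, hf, hf'⟩ := h.exists_dual_map_eq_bot_of_notMem hvh inferInstance
  exact hf (hv f fun z hz => by
    have : f z ∈ h.map f := Submodule.mem_map_of_mem hz
    simpa [hf'] using this)

/-- for a Lie bialgebra `(g, g*)`, a linear subspace `h ⊆ g` and its
annihilator `h° ⊆ g*`, the subspace `h ⊕ h°` of `g ⊕ g*` is closed under the
double bracket iff `h` is a Lie subalgebra of `g` and `h°` is a Lie subalgebra of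
`g*` (null Dirac structures, base-point case of Proposition 7.1). -/
theorem null_dirac_iff_subalgebras
    {g : Type*} [LieRing g] [LieAlgebra ℝ g] [FiniteDimensional ℝ g]
    (br : Dual ℝ g →ₗ[ℝ] Dual ℝ g →ₗ[ℝ] Dual ℝ g)
    (br_skew : ∀ ξ : Dual ℝ g, br ξ ξ = 0)
    (br_jacobi : ∀ ξ η ζ : Dual ℝ g,
      br (br ξ η) ζ + br (br η ζ) ξ + br (br ζ ξ) η = 0)
    (ad : g → Dual ℝ g → Dual ℝ g)
    (had : ∀ (x : g) (ξ : Dual ℝ g) (y : g), ad x ξ y = - ξ ⁅x, y⁆)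
    (ad' : Dual ℝ g → g → g)
    (had' : ∀ (ξ : Dual ℝ g) (x : g) (η : Dual ℝ g), η (ad' ξ x) = - br ξ η x)
    (hcompat : LieBialgebraCompat (fun ξ η => br ξ η) ad)
    (h : Submodule ℝ g) :
    (∀ x ∈ h, ∀ y ∈ h, ∀ ξ η : Dual ℝ g,
        (∀ z ∈ h, ξ z = 0) → (∀ z ∈ h, η z = 0) →
        (doubleBracket (fun ξ η => br ξ η) ad ad' (x, ξ) (y, η)).1 ∈ h ∧
        (∀ z ∈ h, (doubleBracket (fun ξ η => br ξ η) ad ad' (x, ξ) (y, η)).2 z = 0))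
      ↔ ((∀ x ∈ h, ∀ y ∈ h, ⁅x, y⁆ ∈ h) ∧
         (∀ ξ η : Dual ℝ g, (∀ z ∈ h, ξ z = 0) → (∀ z ∈ h, η z = 0) →
           ∀ z ∈ h, br ξ η z = 0)) := by
  have ad'0 : ∀ x : g, ad' 0 x = 0 := by
    intro x
    rw [← Module.forall_dual_apply_eq_zero_iff ℝ]
    intro φ
    simp [had' 0 x φ]
  constructor
  · intro H
    constructor
    · intro x hx y hy
      have := (H x hx y hy 0 0 (by simp) (by simp)).1
      simpa [doubleBracket, ad'0] using this
    · intro ξ η hξ hη z hz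
      have := (H 0 h.zero_mem 0 h.zero_mem ξ η hξ hη).2 z hz
      simpa [doubleBracket, had] using this
  · rintro ⟨H1, H2⟩ x hx y hy ξ η hξ hη
    have hadmem : ∀ ξ : Dual ℝ g, (∀ z ∈ h, ξ z = 0) → ∀ w ∈ h, ad' ξ w ∈ h := by
      intro ξ hξ w hw
      apply mem_of_forall_ann
      intro φ hφ
      rw [had']
      simpa using H2 ξ φ hξ hφ w hw
    constructor
    · show ⁅x, y⁆ + ad' ξ y - ad' η x ∈ h
      rw [sub_eq_add_neg]
      exact h.add_mem (h.add_mem (H1 x hx y hy) (hadmem ξ hξ y hy))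
        (h.neg_mem (hadmem η hη x hx))
    · intro z hz
      simp only [doubleBracket, LinearMap.add_apply, LinearMap.sub_apply]
      rw [had, had, H2 ξ η hξ hη z hz,
        hη _ (H1 x hx z hz), hξ _ (H1 y hy z hz)]
      ring
end
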